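/- Let A₀, A₁ be n×n real matrices, λ ∈ [0,1], β ∈ (0,1), and define 𝓛(X) = λA₁XA₁ᵀ + (1-λ)A₀XA₀ᵀ for n×n real matrices X. Suppose there exists a symmetric positive definite matrix Ξ such that Ξ - β·𝓛(Ξ) is positive definite. Let W and X₀ be positive semidefinite n×n matrices and define X_{i+1} = 𝓛(X_i) + W. Then the series ∑_{i=0}^∞ β^i X_i converges entrywise absolutely (i.e., the matrix-valued family (β^i X_i)_{i∈ℕ} is summable). -/

import Mathlib

open Matrix

namespace Stmt14Aux

variable {n : ℕ}

lemma qf_nonneg {M : Matrix (Fin n) (Fin n) ℝ} (h : M.PosSemidef) (x : Fin n → ℝ) :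
    0 ≤ x ⬝ᵥ M *ᵥ x := by simpa using h.dotProduct_mulVec_nonneg x

lemma psd_of {M : Matrix (Fin n) (Fin n) ℝ} (h1 : M.IsHermitian)
    (h2 : ∀ x : Fin n → ℝ, 0 ≤ x ⬝ᵥ M *ᵥ x) : M.PosSemidef :=
  PosSemidef.of_dotProduct_mulVec_nonneg h1 fun x => by simpa using h2 x

lemma qf_smul (c : ℝ) (M : Matrix (Fin n) (Fin n) ℝ) (x : Fin n → ℝ) :
    x ⬝ᵥ (c • M) *ᵥ x = c * (x ⬝ᵥ M *ᵥ x) := by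
  rw [smul_mulVec, dotProduct_smul, smul_eq_mul]

lemma qf_sub (M N : Matrix (Fin n) (Fin n) ℝ) (x : Fin n → ℝ) :
    x ⬝ᵥ (M - N) *ᵥ x = x ⬝ᵥ M *ᵥ x - x ⬝ᵥ N *ᵥ x := by
  rw [sub_mulVec, dotProduct_sub]

lemma qf_add (M N : Matrix (Fin n) (Fin n) ℝ) (x : Fin n → ℝ) :
    x ⬝ᵥ (M + N) *ᵥ x = x ⬝ᵥ M *ᵥ x + x ⬝ᵥ N *ᵥ x := by
  rw [add_mulVec, dotProduct_add]

lemma qf_vec_smul (c : ℝ) (M : Matrix (Fin n) (Fin n) ℝ) (x : Fin n → ℝ) :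
    (c • x) ⬝ᵥ M *ᵥ (c • x) = c ^ 2 * (x ⬝ᵥ M *ᵥ x) := by
  rw [mulVec_smul, dotProduct_smul, smul_dotProduct, smul_eq_mul, smul_eq_mul]
  ring


lemma continuous_qf (M : Matrix (Fin n) (Fin n) ℝ) :
    Continuous fun x : Fin n → ℝ => x ⬝ᵥ M *ᵥ x := by
  simp only [dotProduct, Matrix.mulVec]
  apply continuous_finset_sum
  intro j _
  exact (continuous_apply j).mul
    (continuous_finset_sum _ fun k _ => continuous_const.mul (continuous_apply k))

lemma herm_smul {M : Matrix (Fin n) (Fin n) ℝ} (h : M.IsHermitian) (c : ℝ) :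
    (c • M).IsHermitian := by
  show (c • M)ᴴ = c • M
  rw [conjTranspose_smul, h.eq, star_trivial]

lemma qf_pair (M : Matrix (Fin n) (Fin n) ℝ) (j k : Fin n) :
    (Pi.single j 1 : Fin n → ℝ) ⬝ᵥ M *ᵥ (Pi.single k 1) = M j k := by
  rw [mulVec_single, single_dotProduct]
  simp

/-- Entry bound for positive semidefinite matrices. -/
lemma abs_entry {M : Matrix (Fin n) (Fin n) ℝ} (h : M.PosSemidef) (j k : Fin n) :
    2 * |M j k| ≤ M j j + M k k := by
  have hsym : M k j = M j k := by
    simpa using (h.1.apply j k)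
  have p := qf_nonneg h (Pi.single j 1 + Pi.single k 1)
  have q := qf_nonneg h (Pi.single j 1 - Pi.single k 1)
  rw [mulVec_add, dotProduct_add, add_dotProduct, add_dotProduct, qf_pair, qf_pair, qf_pair,
    qf_pair] at p
  rw [mulVec_sub, dotProduct_sub, sub_dotProduct, sub_dotProduct, qf_pair, qf_pair, qf_pair,
    qf_pair] at q
  rcases abs_cases (M j k) with ⟨he, _⟩ | ⟨he, _⟩ <;> rw [he] <;> linarith

/-- A positive definite matrix dominates (up to a nonnegative constant) every quadratic form. -/
lemma exists_bound (hn : 0 < n) (Ξ M : Matrix (Fin n) (Fin n) ℝ) (hΞ : Ξ.PosDef) :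
    ∃ a : ℝ, 0 ≤ a ∧ ∀ x : Fin n → ℝ, x ⬝ᵥ M *ᵥ x ≤ a * (x ⬝ᵥ Ξ *ᵥ x) := by
  haveI : Nonempty (Fin n) := ⟨⟨0, hn⟩⟩
  have hcomp : IsCompact (Metric.sphere (0 : Fin n → ℝ) 1) := isCompact_sphere 0 1
  have hne : (Metric.sphere (0 : Fin n → ℝ) 1).Nonempty :=
    NormedSpace.sphere_nonempty.mpr zero_le_one
  obtain ⟨u, huS, hu⟩ := hcomp.exists_isMaxOn hne (continuous_qf M).continuousOn
  obtain ⟨v, hvS, hv⟩ := hcomp.exists_isMinOn hne (continuous_qf Ξ).continuousOn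
  have hv1 : ‖v‖ = 1 := by simpa using mem_sphere_zero_iff_norm.mp hvS
  have hvne : v ≠ 0 := by
    intro h0; rw [h0, norm_zero] at hv1; norm_num at hv1
  set δ : ℝ := v ⬝ᵥ Ξ *ᵥ v with hδdef
  have hδ : 0 < δ := by simpa using hΞ.dotProduct_mulVec_pos hvne
  set μ : ℝ := max (u ⬝ᵥ M *ᵥ u) 0 with hμdef
  have hμ0 : 0 ≤ μ := le_max_right _ _
  refine ⟨μ / δ, div_nonneg hμ0 hδ.le, fun x => ?_⟩
  by_cases hx : x = 0
  · simp [hx]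
  · set c : ℝ := ‖x‖ with hcdef
    have hc : 0 < c := norm_pos_iff.mpr hx
    set y : Fin n → ℝ := c⁻¹ • x with hy
    have hyS : y ∈ Metric.sphere (0 : Fin n → ℝ) 1 := by
      rw [mem_sphere_zero_iff_norm, hy, norm_smul, norm_inv, norm_norm, ← hcdef,
        inv_mul_cancel₀ hc.ne']
    have hxy : x = c • y := by
      rw [hy, smul_smul, mul_inv_cancel₀ hc.ne', one_smul]
    have h1 : y ⬝ᵥ M *ᵥ y ≤ μ := le_trans (hu hyS) (le_max_left _ _)
    have h2 : δ ≤ y ⬝ᵥ Ξ *ᵥ y := hv hyS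
    have hμle : μ ≤ μ / δ * (y ⬝ᵥ Ξ *ᵥ y) := by
      have := mul_le_mul_of_nonneg_left h2 (div_nonneg hμ0 hδ.le)
      rwa [div_mul_cancel₀ μ hδ.ne'] at this
    have e1 : x ⬝ᵥ M *ᵥ x = c ^ 2 * (y ⬝ᵥ M *ᵥ y) := by
      conv_lhs => rw [hxy]
      exact qf_vec_smul c M y
    have e2 : x ⬝ᵥ Ξ *ᵥ x = c ^ 2 * (y ⬝ᵥ Ξ *ᵥ y) := by
      conv_lhs => rw [hxy]
      exact qf_vec_smul c Ξ y
    rw [e1, e2]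
    calc c ^ 2 * (y ⬝ᵥ M *ᵥ y) ≤ c ^ 2 * (μ / δ * (y ⬝ᵥ Ξ *ᵥ y)) :=
          mul_le_mul_of_nonneg_left (h1.trans hμle) (sq_nonneg c)
      _ = μ / δ * (c ^ 2 * (y ⬝ᵥ Ξ *ᵥ y)) := by ring

end Stmt14Aux

open Stmt14Aux

/-- Under a Lyapunov certificate of mean-square stability of `β^{1/2}`-scaled dynamics,
the discounted sum `∑ β^i X_i` of the affine recursion `X_{i+1} = 𝓛(X_i) + W` is
well defined (the family `(β^i X_i)` is summable). -/
theorem stmt14 (n : ℕ) (A₀ A₁ : Matrix (Fin n) (Fin n) ℝ)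
    (lam : ℝ) (hlam0 : 0 ≤ lam) (hlam1 : lam ≤ 1)
    (β : ℝ) (hβ0 : 0 < β) (hβ1 : β < 1)
    (L : Matrix (Fin n) (Fin n) ℝ → Matrix (Fin n) (Fin n) ℝ)
    (hL : ∀ X, L X = lam • (A₁ * X * A₁ᵀ) + (1 - lam) • (A₀ * X * A₀ᵀ))
    (Ξ : Matrix (Fin n) (Fin n) ℝ) (hΞ : Ξ.PosDef)
    (hlyap : (Ξ - β • L Ξ).PosDef)
    (W X₀ : Matrix (Fin n) (Fin n) ℝ) (hW : W.PosSemidef) (hX₀ : X₀.PosSemidef)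
    (X : ℕ → Matrix (Fin n) (Fin n) ℝ)
    (hX0 : X 0 = X₀) (hXrec : ∀ i, X (i + 1) = L (X i) + W) :
    Summable (fun i => β ^ i • X i) := by
  rcases Nat.eq_zero_or_pos n with hn | hn
  · subst hn
    have hz : ∀ i, (β ^ i • X i) = 0 := fun i => by
      ext j k; exact j.elim0
    simp only [hz]
    exact summable_zero
  -- basic facts about `L`
  have hconj : ∀ B : Matrix (Fin n) (Fin n) ℝ, Bᵀ = Bᴴ := fun B =>
    (conjTranspose_eq_transpose_of_trivial B).symm
  have hLpsd : ∀ {M : Matrix (Fin n) (Fin n) ℝ}, M.PosSemidef → (L M).PosSemidef := by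
    intro M hM
    rw [hL, hconj, hconj]
    have t1 : (A₁ * M * A₁ᴴ).PosSemidef := hM.mul_mul_conjTranspose_same A₁
    have t0 : (A₀ * M * A₀ᴴ).PosSemidef := hM.mul_mul_conjTranspose_same A₀
    refine psd_of ((herm_smul t1.1 lam).add (herm_smul t0.1 (1 - lam))) fun x => ?_
    rw [qf_add, qf_smul, qf_smul]
    have := qf_nonneg t1 x
    have := qf_nonneg t0 x
    nlinarith
  have hLsmul : ∀ (c : ℝ) (M : Matrix (Fin n) (Fin n) ℝ), L (c • M) = c • L M := by
    intro c M
    rw [hL, hL, Matrix.mul_smul, Matrix.smul_mul, Matrix.mul_smul, Matrix.smul_mul,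
      smul_comm lam c, smul_comm (1 - lam) c, smul_add]
  have hLsub : ∀ M N : Matrix (Fin n) (Fin n) ℝ, L (M - N) = L M - L N := by
    intro M N
    rw [hL, hL, hL, Matrix.mul_sub, Matrix.sub_mul, Matrix.mul_sub, Matrix.sub_mul,
      smul_sub, smul_sub]
    abel
  -- positive semidefiniteness of the iterates
  have hXpsd : ∀ i, (X i).PosSemidef := by
    intro i
    induction i with
    | zero => rw [hX0]; exact hX₀
    | succ i ih =>
      rw [hXrec]
      refine psd_of ((hLpsd ih).1.add hW.1) fun x => ?_
      rw [qf_add]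
      have := qf_nonneg (hLpsd ih) x
      have := qf_nonneg hW x
      linarith
  -- the Lyapunov contraction rate
  obtain ⟨t, ht0, htb⟩ := exists_bound hn (Ξ - β • L Ξ) Ξ hlyap
  have hx₀ne : (Pi.single (⟨0, hn⟩ : Fin n) 1 : Fin n → ℝ) ≠ 0 := by
    intro h0
    have := congrFun h0 ⟨0, hn⟩
    simp at this
  have hqΞx₀ : 0 < (Pi.single (⟨0, hn⟩ : Fin n) 1 : Fin n → ℝ) ⬝ᵥ Ξ *ᵥ
      (Pi.single (⟨0, hn⟩ : Fin n) 1) := by simpa using hΞ.dotProduct_mulVec_pos hx₀ne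
  have hqDx₀ : 0 < (Pi.single (⟨0, hn⟩ : Fin n) 1 : Fin n → ℝ) ⬝ᵥ (Ξ - β • L Ξ) *ᵥ
      (Pi.single (⟨0, hn⟩ : Fin n) 1) := by simpa using hlyap.dotProduct_mulVec_pos hx₀ne
  have ht : 0 < t := by nlinarith [htb (Pi.single (⟨0, hn⟩ : Fin n) 1)]
  set r : ℝ := max (1 - 1 / t) β with hrdef
  have hr1 : r < 1 := by
    apply max_lt _ hβ1
    have : 0 < 1 / t := by positivity
    linarith
  have hr0 : 0 < r := lt_of_lt_of_le hβ0 (le_max_right _ _)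
  have hβr : β ≤ r := le_max_right _ _
  have hkey : ∀ x : Fin n → ℝ, β * (x ⬝ᵥ (L Ξ) *ᵥ x) ≤ r * (x ⬝ᵥ Ξ *ᵥ x) := by
    intro x
    have h1 := htb x
    rw [qf_sub, qf_smul] at h1
    have h2 : 0 ≤ x ⬝ᵥ Ξ *ᵥ x := qf_nonneg hΞ.posSemidef x
    have h3 : (1 - 1 / t) ≤ r := le_max_left _ _
    have h4 := mul_le_mul_of_nonneg_right h3 h2
    have h5 : t * (1 / t) = 1 := by field_simp
    nlinarith
  -- domination constants for X₀ and W
  obtain ⟨a, ha0, ha⟩ := exists_bound hn Ξ X₀ hΞ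
  obtain ⟨b, hb0, hb⟩ := exists_bound hn Ξ W hΞ
  set m : ℕ → ℝ := fun i => (a + b * i) * r ^ i with hmdef
  have hm0 : ∀ i, 0 ≤ m i := fun i => by
    have : (0 : ℝ) ≤ a + b * i := by positivity
    positivity
  have hmsucc : ∀ i, m (i + 1) = r * m i + b * r ^ (i + 1) := by
    intro i
    simp only [hmdef]
    push_cast
    ring
  -- the quadratic-form invariant
  have Inv : ∀ i (x : Fin n → ℝ), x ⬝ᵥ (β ^ i • X i) *ᵥ x ≤ m i * (x ⬝ᵥ Ξ *ᵥ x) := by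
    intro i
    induction i with
    | zero =>
      intro x
      have : m 0 = a := by simp [hmdef]
      rw [this, pow_zero, one_smul, hX0]
      exact ha x
    | succ i ih =>
      -- matrix-level consequence of the induction hypothesis
      have hpsd_i : (m i • Ξ - β ^ i • X i).PosSemidef := by
        refine psd_of ((herm_smul hΞ.1 (m i)).sub (herm_smul (hXpsd i).1 (β ^ i))) fun x => ?_
        rw [qf_sub, qf_smul]
        have := ih x
        linarith
      have hLdiff : (m i • L Ξ - β ^ i • L (X i)).PosSemidef := by
        have := hLpsd hpsd_i
        rwa [hLsub, hLsmul, hLsmul] at this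
      intro x
      set s : ℝ := x ⬝ᵥ Ξ *ᵥ x with hsdef
      have hs0 : 0 ≤ s := qf_nonneg hΞ.posSemidef x
      set p : ℝ := x ⬝ᵥ (L (X i)) *ᵥ x with hpdef
      set w : ℝ := x ⬝ᵥ W *ᵥ x with hwdef
      set u : ℝ := x ⬝ᵥ (L Ξ) *ᵥ x with hudef
      have h1 : β ^ i * p ≤ m i * u := by
        have := qf_nonneg hLdiff x
        rw [qf_sub, qf_smul, qf_smul] at this
        linarith
      have h2 : β * u ≤ r * s := hkey x
      have h3 : w ≤ b * s := hb x
      have hgoal : x ⬝ᵥ (β ^ (i + 1) • X (i + 1)) *ᵥ x = β ^ (i + 1) * (p + w) := by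
        rw [qf_smul, hXrec, qf_add]
      rw [hgoal, hmsucc]
      have hpow : β ^ (i + 1) ≤ r ^ (i + 1) := pow_le_pow_left₀ hβ0.le hβr (i + 1)
      calc β ^ (i + 1) * (p + w) = β * (β ^ i * p) + β ^ (i + 1) * w := by ring
        _ ≤ β * (m i * u) + β ^ (i + 1) * (b * s) := by
            refine add_le_add (mul_le_mul_of_nonneg_left h1 hβ0.le)
              (mul_le_mul_of_nonneg_left h3 (by positivity))
        _ = m i * (β * u) + β ^ (i + 1) * b * s := by ring
        _ ≤ m i * (r * s) + r ^ (i + 1) * b * s := by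
            refine add_le_add (mul_le_mul_of_nonneg_left h2 (hm0 i)) ?_
            have : β ^ (i + 1) * b ≤ r ^ (i + 1) * b :=
              mul_le_mul_of_nonneg_right hpow hb0
            exact mul_le_mul_of_nonneg_right this hs0
        _ = (r * m i + b * r ^ (i + 1)) * s := by ring
  -- entrywise summability
  have hC : ∀ j : Fin n, 0 ≤ Ξ j j := by
    intro j
    have := qf_nonneg hΞ.posSemidef (Pi.single j 1)
    rwa [qf_pair] at this
  have key : ∀ j k : Fin n, Summable fun i => (β ^ i • X i) j k := by
    intro j k
    have hpsdi : ∀ i, (β ^ i • X i).PosSemidef := by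
      intro i
      refine psd_of (herm_smul (hXpsd i).1 _) fun x => ?_
      rw [qf_smul]
      have := qf_nonneg (hXpsd i) x
      positivity
    have hdiag : ∀ (i) (l : Fin n), (β ^ i • X i) l l ≤ m i * Ξ l l := by
      intro i l
      have := Inv i (Pi.single l 1)
      rwa [qf_pair, qf_pair] at this
    have hbound : ∀ i, |(β ^ i • X i) j k| ≤ m i * ((Ξ j j + Ξ k k) / 2) := by
      intro i
      have h1 := abs_entry (hpsdi i) j k
      have h2 := hdiag i j
      have h3 := hdiag i k
      linarith
    have hmaj : Summable fun i => m i * ((Ξ j j + Ξ k k) / 2) := by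
      have S1 : Summable fun i : ℕ => r ^ i := summable_geometric_of_lt_one hr0.le hr1
      have S2 : Summable fun i : ℕ => (i : ℝ) * r ^ i := by
        have := summable_pow_mul_geometric_of_norm_lt_one (R := ℝ) 1
          (r := r) (by rw [Real.norm_eq_abs, abs_of_pos hr0]; exact hr1)
        simpa using this
      have := (S1.mul_left (a * ((Ξ j j + Ξ k k) / 2))).add
        (S2.mul_left (b * ((Ξ j j + Ξ k k) / 2)))
      refine this.congr fun i => ?_
      simp only [hmdef]
      ring
    have habs : Summable fun i => |(β ^ i • X i) j k| :=
      Summable.of_nonneg_of_le (fun i => abs_nonneg _) hbound hmaj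
    exact habs.of_abs
  exact Pi.summable.mpr fun j => Pi.summable.mpr fun k => key j k
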